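/- Semisimple finite-dimensional representations in characteristic zero are determined by their characters: let k be a field of characteristic 0, G a group, and V, W finite-dimensional k-vector spaces with representations ρ : G → GL(V) and τ : G → GL(W) such that V and W are semisimple as modules over the group algebra k[G]. If trace(ρ(g)) = trace(τ(g)) for every g ∈ G, then V and W are isomorphic as representations of G, i.e. there is a k-linear isomorphism V ≃ W intertwining ρ and τ. -/

import Mathlib

open LinearMap Module

section BN
variable (k : Type) [Field k] (A : Type) [Ring A] [Algebra k A]
variable (M : Type) [AddCommGroup M] [Module k M] [Module A M] [IsScalarTower k A M]

/-- scalar multiplication by `a : A` as a `k`-linear endomorphism. -/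
def BN.smulEnd (a : A) : M →ₗ[k] M where
  toFun m := a • m
  map_add' := smul_add a
  map_smul' c m := by
    show a • (c • m) = c • (a • m)
    rw [← algebraMap_smul A c m, ← mul_smul, ← Algebra.commutes, mul_smul, algebraMap_smul]

@[simp] lemma BN.smulEnd_apply (a : A) (m : M) : BN.smulEnd k A M a m = a • m := rfl

variable {M} {N : Type} [AddCommGroup N] [Module k N] [Module A N] [IsScalarTower k A N]

lemma BN.trace_congr (e : M ≃ₗ[A] N) (a : A) :
    trace k M (BN.smulEnd k A M a) = trace k N (BN.smulEnd k A N a) := by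
  rw [← LinearMap.trace_conj' (BN.smulEnd k A M a) (e.restrictScalars k)]
  congr 1
  ext n
  simp [LinearEquiv.conj_apply, map_smul]

lemma BN.trace_prod [FiniteDimensional k M] [FiniteDimensional k N] (a : A) :
    trace k (M × N) (BN.smulEnd k A (M × N) a) =
      trace k M (BN.smulEnd k A M a) + trace k N (BN.smulEnd k A N a) := by
  rw [← LinearMap.trace_prodMap']
  rfl

variable (M)

lemma BN.findim_submodule [FiniteDimensional k M] (p : Submodule A M) :
    FiniteDimensional k p :=
  FiniteDimensional.of_injective (p.subtype.restrictScalars k) p.injective_subtype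

variable {M}

lemma BN.trace_isCompl [FiniteDimensional k M] {p q : Submodule A M} (h : IsCompl p q) (a : A) :
    trace k M (BN.smulEnd k A M a) =
      trace k p (BN.smulEnd k A p a) + trace k q (BN.smulEnd k A q a) := by
  haveI := BN.findim_submodule k A M p
  haveI := BN.findim_submodule k A M q
  rw [← BN.trace_prod k A, BN.trace_congr k A (Submodule.prodEquivOfIsCompl p q h)]

lemma BN.finrank_isCompl [FiniteDimensional k M] {p q : Submodule A M} (h : IsCompl p q) :
    finrank k M = finrank k p + finrank k q := by
  haveI := BN.findim_submodule k A M p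
  haveI := BN.findim_submodule k A M q
  rw [← Module.finrank_prod (R := k)]
  exact (((Submodule.prodEquivOfIsCompl p q h).restrictScalars k).finrank_eq).symm

/-- linear equivalence between subsingleton modules. -/
def BN.equivOfSubsingleton [Subsingleton M] [Subsingleton N] : M ≃ₗ[A] N where
  toFun _ := 0
  invFun _ := 0
  map_add' _ _ := (add_zero 0).symm
  map_smul' a _ := (smul_zero a).symm
  left_inv _ := Subsingleton.elim _ _
  right_inv _ := Subsingleton.elim _ _

lemma BN.subsingleton_of_trace [CharZero k] [FiniteDimensional k N]
    (h0 : ∀ a : A, trace k N (BN.smulEnd k A N a) = 0) : Subsingleton N := by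
  have h1 : BN.smulEnd k A N 1 = LinearMap.id := by ext x; simp
  have := h0 1
  rw [h1, LinearMap.trace_id] at this
  exact Module.finrank_zero_iff.mp (Nat.cast_eq_zero.mp this)

lemma BN.pi_semisimple [IsSemisimpleModule A M] (ι : Type) [Fintype ι] [DecidableEq ι] :
    IsSemisimpleModule A (ι → M) := by
  refine isSemisimpleModule_of_isSemisimpleModule_submodule'
    (p := fun i : ι => LinearMap.range (LinearMap.single A (fun _ : ι => M) i)) (fun i => ?_) ?_
  · exact IsSemisimpleModule.range _
  · simp_rw [LinearMap.range_eq_map, Submodule.iSup_map_single, Submodule.pi_top]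


/-- From a nonzero map to a simple module, extract a simple submodule isomorphic to it. -/
lemma BN.exists_simple_sub_equiv [IsSemisimpleModule A M] (S₀ : Type) [AddCommGroup S₀]
    [Module A S₀] [IsSimpleModule A S₀] (β : M →ₗ[A] S₀) (hβ : β ≠ 0) :
    ∃ p : Submodule A M, Nonempty (p ≃ₗ[A] S₀) := by
  obtain ⟨T, hT⟩ := exists_isCompl (LinearMap.ker β)
  have hrange : LinearMap.range β = ⊤ := by
    rcases eq_bot_or_eq_top (LinearMap.range β) with h | h
    · exact absurd (LinearMap.range_eq_bot.mp h) hβ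
    · exact h
  refine ⟨T, ⟨LinearEquiv.ofBijective (β.comp T.subtype) ⟨?_, ?_⟩⟩⟩
  · rw [← LinearMap.ker_eq_bot, eq_bot_iff]
    intro x hx
    have hx' : (x : M) ∈ LinearMap.ker β ⊓ T := ⟨hx, x.2⟩
    rw [hT.inf_eq_bot, Submodule.mem_bot] at hx'
    exact Submodule.coe_eq_zero.mp hx'
  · rw [← LinearMap.range_eq_top, LinearMap.range_comp, Submodule.range_subtype]
    have h1 : Submodule.map β (LinearMap.ker β) = ⊥ := by
      rw [eq_bot_iff]; rintro x ⟨y, hy, rfl⟩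
      simpa using hy
    rw [eq_top_iff, ← hrange, LinearMap.range_eq_map, ← hT.sup_eq_top, Submodule.map_sup, h1,
      bot_sup_eq]


/-- If `ψ : A → M` has kernel contained in `L`, and `M` is semisimple, then `A ⧸ L` is a
quotient of `M`. -/
lemma BN.exists_surjective_to_quot [IsSemisimpleModule A M] (L : Submodule A A)
    (ψ : A →ₗ[A] M) (hle : LinearMap.ker ψ ≤ L) :
    ∃ g : M →ₗ[A] (A ⧸ L), Function.Surjective g := by
  obtain ⟨c, hc⟩ := exists_isCompl (LinearMap.range ψ)
  let pr : M →ₗ[A] LinearMap.range ψ := Submodule.linearProjOfIsCompl _ _ hc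
  let θ : (A ⧸ LinearMap.ker ψ) →ₗ[A] A ⧸ L :=
    Submodule.liftQ _ L.mkQ (by rwa [Submodule.ker_mkQ])
  refine ⟨θ ∘ₗ (ψ.quotKerEquivRange.symm : LinearMap.range ψ →ₗ[A] A ⧸ LinearMap.ker ψ) ∘ₗ pr,
    fun q => ?_⟩
  obtain ⟨x, rfl⟩ := L.mkQ_surjective q
  refine ⟨ψ x, ?_⟩
  have h1 : pr (ψ x) = ⟨ψ x, LinearMap.mem_range_self ψ x⟩ :=
    Submodule.linearProjOfIsCompl_apply_left hc ⟨ψ x, LinearMap.mem_range_self ψ x⟩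
  have h2 : ψ.quotKerEquivRange.symm ⟨ψ x, LinearMap.mem_range_self ψ x⟩ =
      Submodule.Quotient.mk x := by
    rw [LinearEquiv.symm_apply_eq]
    exact Subtype.ext (ψ.quotKerEquivRange_apply_mk x).symm
  simp only [LinearMap.coe_comp, Function.comp_apply, LinearEquiv.coe_coe, h1, h2]
  rfl


lemma BN.exists_simple_hom [CharZero k] [FiniteDimensional k M] [FiniteDimensional k N]
    [IsSemisimpleModule A M] [IsSemisimpleModule A N] [Nontrivial M]
    (htr : ∀ a : A, trace k M (BN.smulEnd k A M a) = trace k N (BN.smulEnd k A N a)) :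
    ∃ p : Submodule A M, IsSimpleModule A p ∧ ∃ f : p →ₗ[A] N, f ≠ 0 := by
  by_contra hex
  push_neg at hex
  classical
  -- the "annihilator" ideals as kernels
  let b := Module.finBasis k M
  let c := Module.finBasis k N
  let φM : A →ₗ[A] (Fin (finrank k M) → M) :=
    LinearMap.pi fun i => LinearMap.toSpanSingleton A M (b i)
  let φN : A →ₗ[A] (Fin (finrank k N) → N) :=
    LinearMap.pi fun i => LinearMap.toSpanSingleton A N (c i)
  have hkerM : ∀ a ∈ LinearMap.ker φM, ∀ m : M, a • m = 0 := by
    intro a ha m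
    have h0 : BN.smulEnd k A M a = 0 := by
      apply b.ext
      intro i
      have := congrFun (congrArg (fun f => (f : (Fin (finrank k M) → M))) ha.out) i
      simpa [φM] using this
    simpa using congrArg (fun f : M →ₗ[k] M => f m) h0
  have hkerN : ∀ a ∈ LinearMap.ker φN, ∀ m : N, a • m = 0 := by
    intro a ha m
    have h0 : BN.smulEnd k A N a = 0 := by
      apply c.ext
      intro i
      have := congrFun (congrArg (fun f => (f : (Fin (finrank k N) → N))) ha.out) i
      simpa [φN] using this
    simpa using congrArg (fun f : N →ₗ[k] N => f m) h0
  haveI hssM : IsSemisimpleModule A (Fin (finrank k M) → M) :=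
    BN.pi_semisimple A (M := M) (Fin (finrank k M))
  haveI hssN : IsSemisimpleModule A (Fin (finrank k N) → N) :=
    BN.pi_semisimple A (M := N) (Fin (finrank k N))
  -- the two kernels generate `A`
  have hsup : LinearMap.ker φM ⊔ LinearMap.ker φN = ⊤ := by
    by_contra hne
    set L := LinearMap.ker φM ⊔ LinearMap.ker φN with hL
    haveI : Nontrivial (A ⧸ L) :=
      Submodule.Quotient.nontrivial_iff.mpr hne
    obtain ⟨gM, hgM⟩ := BN.exists_surjective_to_quot A L φM le_sup_left
    obtain ⟨gN, hgN⟩ := BN.exists_surjective_to_quot A L φN le_sup_right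
    haveI : IsSemisimpleModule A (A ⧸ L) :=
      IsSemisimpleModule.congr (gM.quotKerEquivOfSurjective hgM).symm
    obtain ⟨S₀, hS₀⟩ := IsSemisimpleModule.exists_simple_submodule A (A ⧸ L)
    haveI := hS₀
    haveI : Nontrivial S₀ := IsSimpleModule.nontrivial A S₀
    obtain ⟨c₀, hc₀⟩ := exists_isCompl S₀
    let πQ : (A ⧸ L) →ₗ[A] S₀ := Submodule.linearProjOfIsCompl _ _ hc₀
    have hπQ : Function.Surjective πQ := fun s =>
      ⟨(s : A ⧸ L), Submodule.linearProjOfIsCompl_apply_left hc₀ s⟩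
    -- obtain nonzero maps `M → S₀` and `N → S₀`
    have comp_ne : ∀ (P : Type) (_ : AddCommGroup P) (_ : Module A P) (_ : IsSemisimpleModule A P)
        (ι : Type) (_ : Fintype ι) (γ : (ι → P) →ₗ[A] ↥S₀), Function.Surjective γ →
        ∃ i : ι, γ ∘ₗ LinearMap.single A (fun _ : ι => P) i ≠ 0 := by
      intro P _ _ _ ι _ γ hγ
      by_contra hall
      push_neg at hall
      obtain ⟨s, hs⟩ := exists_ne (0 : S₀)
      obtain ⟨x, hx⟩ := hγ s
      apply hs
      rw [← hx, ← Finset.univ_sum_single x, map_sum]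
      refine Finset.sum_eq_zero fun i _ => ?_
      exact congrArg (fun f : P →ₗ[A] ↥S₀ => f (x i)) (hall i)
    obtain ⟨iM, hiM⟩ := comp_ne M inferInstance inferInstance inferInstance (Fin (finrank k M)) inferInstance (πQ ∘ₗ gM) (hπQ.comp hgM)
    obtain ⟨iN, hiN⟩ := comp_ne N inferInstance inferInstance inferInstance (Fin (finrank k N)) inferInstance (πQ ∘ₗ gN) (hπQ.comp hgN)
    obtain ⟨p, ⟨ep⟩⟩ := BN.exists_simple_sub_equiv A (↥S₀) _ hiM
    obtain ⟨q, ⟨eq'⟩⟩ := BN.exists_simple_sub_equiv A (↥S₀) _ hiN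
    haveI : IsSimpleModule A p := IsSimpleModule.congr ep
    have hf : (q.subtype ∘ₗ (eq'.symm : ↥S₀ →ₗ[A] q) ∘ₗ (ep : p →ₗ[A] ↥S₀)) ≠ 0 := by
      haveI : Nontrivial p := IsSimpleModule.nontrivial A p
      obtain ⟨x, hx⟩ := exists_ne (0 : p)
      intro h0
      apply hx
      have := congrArg (fun f : p →ₗ[A] N => f x) h0
      simp only [LinearMap.coe_comp, Function.comp_apply, LinearEquiv.coe_coe,
        LinearMap.zero_apply, Submodule.coe_subtype] at this
      have h1 : eq'.symm (ep x) = 0 := Submodule.coe_eq_zero.mp this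
      have h2 : ep x = 0 := by simpa using congrArg eq' h1
      simpa using congrArg ep.symm h2
    exact hf (hex p this _)
  -- split `1 = a + b`
  obtain ⟨a, haI, bb, hbJ, hab⟩ :=
    Submodule.mem_sup.mp (show (1 : A) ∈ LinearMap.ker φM ⊔ LinearMap.ker φN by
      rw [hsup]; trivial)
  have hMz : BN.smulEnd k A M a = 0 := by
    ext m; simpa using hkerM a haI m
  have hNid : BN.smulEnd k A N a = LinearMap.id := by
    ext x
    show a • x = x
    have hb : bb • x = 0 := hkerN bb hbJ x
    calc a • x = a • x + bb • x := by rw [hb, add_zero]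
    _ = (a + bb) • x := (add_smul a bb x).symm
    _ = x := by rw [hab, one_smul]
  have h2 := htr a
  rw [hMz, hNid, map_zero, LinearMap.trace_id] at h2
  haveI : Subsingleton N := Module.finrank_zero_iff.mp (Nat.cast_eq_zero.mp h2.symm)
  have h3 := htr 1
  have hM1 : BN.smulEnd k A M 1 = LinearMap.id := by ext m; simp
  rw [hM1, LinearMap.trace_id, Subsingleton.elim (BN.smulEnd k A N 1) 0, map_zero] at h3
  have : finrank k M = 0 := Nat.cast_eq_zero.mp h3
  rw [Module.finrank_zero_iff] at this
  exact not_subsingleton_iff_nontrivial.mpr ‹Nontrivial M› this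


lemma BN.equiv_of_subsingleton_left [CharZero k] [FiniteDimensional k N] [Subsingleton M]
    (htr : ∀ a : A, trace k M (BN.smulEnd k A M a) = trace k N (BN.smulEnd k A N a)) :
    Nonempty (M ≃ₗ[A] N) := by
  haveI : Subsingleton N := BN.subsingleton_of_trace k A fun a => by
    rw [← htr a, Subsingleton.elim (BN.smulEnd k A M a) 0, map_zero]
  exact ⟨BN.equivOfSubsingleton A⟩

theorem BN.main [CharZero k] (n : ℕ) :
    ∀ (M N : Type) [AddCommGroup M] [Module k M] [Module A M] [IsScalarTower k A M]
      [FiniteDimensional k M] [IsSemisimpleModule A M]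
      [AddCommGroup N] [Module k N] [Module A N] [IsScalarTower k A N]
      [FiniteDimensional k N] [IsSemisimpleModule A N],
      finrank k M ≤ n →
      (∀ a : A, trace k M (BN.smulEnd k A M a) = trace k N (BN.smulEnd k A N a)) →
      Nonempty (M ≃ₗ[A] N) := by
  induction n with
  | zero =>
    intro M N _ _ _ _ _ _ _ _ _ _ _ _ hfr htr
    haveI : Subsingleton M := by
      rw [Nat.le_zero] at hfr
      exact Module.finrank_zero_iff.mp hfr
    exact BN.equiv_of_subsingleton_left k A htr
  | succ n ih =>
    intro M N _ _ _ _ _ _ _ _ _ _ _ _ hfr htr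
    rcases subsingleton_or_nontrivial M with hM | hM
    · exact BN.equiv_of_subsingleton_left k A htr
    · obtain ⟨S, hSs, f, hf⟩ := BN.exists_simple_hom k A htr
      haveI := hSs
      have hinj : Function.Injective f := LinearMap.injective_of_ne_zero hf
      obtain ⟨M', hM'⟩ := exists_isCompl S
      obtain ⟨N', hN'⟩ := exists_isCompl (LinearMap.range f)
      haveI := BN.findim_submodule k A M S
      haveI := BN.findim_submodule k A M M'
      haveI := BN.findim_submodule k A N (LinearMap.range f)
      haveI := BN.findim_submodule k A N N'
      let eS : S ≃ₗ[A] LinearMap.range f := LinearEquiv.ofInjective f hinj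
      have htr' : ∀ a : A,
          trace k M' (BN.smulEnd k A M' a) = trace k N' (BN.smulEnd k A N' a) := by
        intro a
        have h1 := BN.trace_isCompl k A hM' a
        have h2 := BN.trace_isCompl k A hN' a
        have h3 := BN.trace_congr k A eS a
        have h4 : trace k S (BN.smulEnd k A S a) + trace k M' (BN.smulEnd k A M' a) =
            trace k S (BN.smulEnd k A S a) + trace k N' (BN.smulEnd k A N' a) := by
          rw [← h1, htr a, h2, ← h3]
        exact add_left_cancel h4
      have hfr' : finrank k M' ≤ n := by
        have h5 := BN.finrank_isCompl k A hM'
        haveI : Nontrivial S := IsSimpleModule.nontrivial A S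
        have h6 : 0 < finrank k S := finrank_pos
        omega
      obtain ⟨e'⟩ := ih M' N' hfr' htr'
      exact ⟨((Submodule.prodEquivOfIsCompl S M' hM').symm.trans
        (eS.prodCongr e')).trans (Submodule.prodEquivOfIsCompl (LinearMap.range f) N' hN')⟩

end BN

section Final

variable {k : Type} [Field k] {G : Type} [Group G] {V : Type} [AddCommGroup V] [Module k V]
  (ρ : Representation k G V)

noncomputable instance BN.towerAsModule : IsScalarTower k (MonoidAlgebra k G) ρ.asModule :=
  ⟨fun c r x => by
    show ρ.asAlgebraHom (c • r) x = c • ρ.asAlgebraHom r x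
    rw [map_smul]
    rfl⟩

/-- `asModuleEquiv` as a `k`-linear equivalence. -/
noncomputable def BN.asModuleLinEquiv : ρ.asModule ≃ₗ[k] V :=
  { ρ.asModuleEquiv with map_smul' := fun _ _ => rfl }

lemma BN.trace_smulEnd (a : MonoidAlgebra k G) :
    LinearMap.trace k ρ.asModule (BN.smulEnd k (MonoidAlgebra k G) ρ.asModule a) =
      LinearMap.trace k V (ρ.asAlgebraHom a) := by
  rw [← LinearMap.trace_conj' (BN.smulEnd k (MonoidAlgebra k G) ρ.asModule a)
    (BN.asModuleLinEquiv ρ)]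
  congr 1

end Final

/-- Semisimple finite-dimensional representations in characteristic zero are determined
by their characters: if `ρ : G → GL(V)` and `τ : G → GL(W)` are finite-dimensional
representations over a field `k` of characteristic `0` that are semisimple as modules
over the group algebra `k[G]`, and have the same character `g ↦ trace`, then they are
isomorphic as representations. -/
theorem semisimple_reps_eq_of_char_eq (k : Type) [Field k] [CharZero k] (G : Type) [Group G]
    (V W : Type) [AddCommGroup V] [Module k V] [AddCommGroup W] [Module k W]
    [FiniteDimensional k V] [FiniteDimensional k W]
    (ρ : Representation k G V) (τ : Representation k G W)
    (hV : IsSemisimpleModule (MonoidAlgebra k G) ρ.asModule)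
    (hW : IsSemisimpleModule (MonoidAlgebra k G) τ.asModule)
    (h : ∀ g : G, LinearMap.trace k V (ρ g) = LinearMap.trace k W (τ g)) :
    ∃ e : V ≃ₗ[k] W, ∀ (g : G) (v : V), e (ρ g v) = τ g (e v) := by
  haveI : FiniteDimensional k ρ.asModule := ‹FiniteDimensional k V›
  haveI : FiniteDimensional k τ.asModule := ‹FiniteDimensional k W›
  have key : ∀ a : MonoidAlgebra k G,
      LinearMap.trace k V (ρ.asAlgebraHom a) = LinearMap.trace k W (τ.asAlgebraHom a) := by
    have hext : (LinearMap.trace k V) ∘ₗ (ρ.asAlgebraHom).toLinearMap =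
        (LinearMap.trace k W) ∘ₗ (τ.asAlgebraHom).toLinearMap := by
      apply MonoidAlgebra.lhom_ext'
      intro g
      ext
      simp [Representation.asAlgebraHom_single, h g]
    intro a
    exact congrArg (fun f : MonoidAlgebra k G →ₗ[k] k => f a) hext
  have htr : ∀ a : MonoidAlgebra k G,
      LinearMap.trace k ρ.asModule (BN.smulEnd k (MonoidAlgebra k G) ρ.asModule a) =
        LinearMap.trace k τ.asModule (BN.smulEnd k (MonoidAlgebra k G) τ.asModule a) := by
    intro a
    rw [BN.trace_smulEnd, BN.trace_smulEnd]
    exact key a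
  obtain ⟨e⟩ := BN.main k (MonoidAlgebra k G) (Module.finrank k ρ.asModule)
    ρ.asModule τ.asModule le_rfl htr
  refine ⟨(BN.asModuleLinEquiv ρ).symm.trans
    ((e.restrictScalars k).trans (BN.asModuleLinEquiv τ)), fun g v => ?_⟩
  show BN.asModuleLinEquiv τ (e ((BN.asModuleLinEquiv ρ).symm (ρ g v))) =
    τ g (BN.asModuleLinEquiv τ (e ((BN.asModuleLinEquiv ρ).symm v)))
  have h1 : (BN.asModuleLinEquiv ρ).symm (ρ g v) =
      MonoidAlgebra.of k G g • ((BN.asModuleLinEquiv ρ).symm v) :=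
    ρ.asModuleEquiv_symm_map_rho g v
  rw [h1, map_smul]
  show τ.asModuleEquiv (MonoidAlgebra.of k G g • e ((BN.asModuleLinEquiv ρ).symm v)) = _
  rw [τ.asModuleEquiv_map_smul, τ.asAlgebraHom_of]
  rfl
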